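/- Coherent measurement of a register via controlled shifts and a maximally entangled state: Let d ≥ 1 and let K be a finite type. On ℂ^d (indices {0,…,d−1}), let P_j denote the cyclic shift unitary defined by P_j e_f = e_{(f+j) mod d}, and let U := ∑_{j=0}^{d−1} |j⟩⟨j| ⊗ P_j, a unitary on ℂ^d ⊗ ℂ^d (registers J and F). Let Ψ = |Ψ⟩⟨Ψ| with |Ψ⟩ = (1/√d) ∑_{f=0}^{d−1} e_f ⊗ e_f, the maximally entangled state on two further copies F, F' of ℂ^d. Then for every density matrix ψ on K ⊗ J (i.e., indexed by κ × {0,…,d−1}), the partial trace over F and F' of (1_K ⊗ U ⊗ 1_{F'}) (ψ ⊗ Ψ) (1_K ⊗ U ⊗ 1_{F'})* equals ∑_{j=0}^{d−1} (1_K ⊗ |j⟩⟨j|) ψ (1_K ⊗ |j⟩⟨j|), i.e., the state ψ dephased in the register J. -/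

import Mathlib

open Matrix Kronecker
open scoped ComplexOrder Classical

/-- A density matrix: a positive semidefinite matrix of trace 1. -/
def IsDensityMatrix {n : Type*} [Fintype n] (ρ : Matrix n n ℂ) : Prop :=
  ρ.PosSemidef ∧ ρ.trace = 1

/-- The operator `1_K ⊗ U ⊗ 1_{F'}` on `K ⊗ J ⊗ F ⊗ F'`, where
`U = ∑_{j=0}^{d-1} |j⟩⟨j| ⊗ P_j` and `P_j` is the cyclic shift `P_j e_f = e_{(f+j) mod d}`. -/
noncomputable def coherentCopyOp (K : Type*) (d : ℕ) :
    Matrix (K × Fin d × Fin d × Fin d) (K × Fin d × Fin d × Fin d) ℂ :=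
  Matrix.of fun x y =>
    if x.1 = y.1 ∧ x.2.1 = y.2.1 ∧ x.2.2.2 = y.2.2.2 ∧
        (x.2.2.1 : ℕ) = ((y.2.2.1 : ℕ) + (y.2.1 : ℕ)) % d
    then 1 else 0

/-- The state `ψ ⊗ Ψ` on `K ⊗ J ⊗ F ⊗ F'`, where `Ψ = |Ψ⟩⟨Ψ|` with
`|Ψ⟩ = (1/√d) ∑_f e_f ⊗ e_f` the maximally entangled state on `F ⊗ F'`. -/
noncomputable def psiTensorMaxEnt {K : Type*} {d : ℕ}
    (ψ : Matrix (K × Fin d) (K × Fin d) ℂ) :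
    Matrix (K × Fin d × Fin d × Fin d) (K × Fin d × Fin d × Fin d) ℂ :=
  Matrix.of fun x y =>
    ψ (x.1, x.2.1) (y.1, y.2.1) *
      (if x.2.2.1 = x.2.2.2 ∧ y.2.2.1 = y.2.2.2 then ((1 / (d : ℝ) : ℝ) : ℂ) else 0)

/-- Partial trace over the last two factors `F, F'`. -/
noncomputable def ptraceFF {K : Type*} {d : ℕ} [Fintype K]
    (M : Matrix (K × Fin d × Fin d × Fin d) (K × Fin d × Fin d × Fin d) ℂ) :
    Matrix (K × Fin d) (K × Fin d) ℂ :=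
  Matrix.of fun g g' => ∑ f : Fin d, ∑ f' : Fin d,
    M (g.1, g.2, f, f') (g'.1, g'.2, f, f')

set_option linter.unnecessarySeqFocus false in
lemma U_apply {K : Type*} {d : ℕ} [NeZero d] (x y : K × Fin d × Fin d × Fin d) :
    coherentCopyOp K d x y =
      if y = (x.1, x.2.1, x.2.2.1 - x.2.1, x.2.2.2) then 1 else 0 := by
  obtain ⟨k, j, f, f'⟩ := x; obtain ⟨k', j', g, g'⟩ := y
  simp only [coherentCopyOp, Matrix.of_apply, Prod.mk.injEq]
  have : ((f : ℕ) = ((g : ℕ) + (j' : ℕ)) % d) ↔ f = g + j' := by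
    rw [Fin.add_def]
    exact ⟨fun h => Fin.ext h, fun h => congrArg Fin.val h⟩
  simp only [this]
  by_cases h1 : k = k' <;> by_cases h2 : j = j' <;> by_cases h3 : f' = g'
  all_goals subst_vars <;> simp_all [eq_comm, sub_eq_iff_eq_add']
  all_goals
    rcases eq_or_ne g (f - j') with rfl | h
    · simp [sub_add_cancel]
    · have hf : f ≠ g + j' := fun hf => h (by simp [hf])
      simp [h, hf]

lemma conj_apply {K : Type*} [Fintype K] {d : ℕ} [NeZero d]
    (M : Matrix (K × Fin d × Fin d × Fin d) (K × Fin d × Fin d × Fin d) ℂ)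
    (x z : K × Fin d × Fin d × Fin d) :
    (coherentCopyOp K d * M * (coherentCopyOp K d)ᴴ) x z =
      M (x.1, x.2.1, x.2.2.1 - x.2.1, x.2.2.2) (z.1, z.2.1, z.2.2.1 - z.2.1, z.2.2.2) := by
  simp [Matrix.mul_apply, U_apply, Matrix.conjTranspose_apply, apply_ite (star : ℂ → ℂ),
    ite_mul, mul_ite, Finset.sum_ite_eq, Finset.sum_ite_eq']

/-- Coherent measurement of a register via controlled shifts and a maximally entangled
state: tracing out `F, F'` from `(1_K ⊗ U ⊗ 1_{F'}) (ψ ⊗ Ψ) (1_K ⊗ U ⊗ 1_{F'})*` yields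
the state `ψ` dephased in the register `J`. -/
theorem coherent_measurement {K : Type*} [Fintype K] [DecidableEq K]
    (d : ℕ) (hd : 1 ≤ d)
    (ψ : Matrix (K × Fin d) (K × Fin d) ℂ) (hψ : IsDensityMatrix ψ) :
    ptraceFF (coherentCopyOp K d * psiTensorMaxEnt ψ * (coherentCopyOp K d)ᴴ) =
      ∑ j : Fin d,
        ((1 : Matrix K K ℂ) ⊗ₖ Matrix.single j j (1 : ℂ)) * ψ *
          ((1 : Matrix K K ℂ) ⊗ₖ Matrix.single j j (1 : ℂ)) := by
  have : NeZero d := ⟨by omega⟩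
  ext ⟨k, a⟩ ⟨k', a'⟩
  have hR : ∀ j : Fin d,
      ((((1 : Matrix K K ℂ) ⊗ₖ Matrix.single j j (1 : ℂ)) * ψ *
        ((1 : Matrix K K ℂ) ⊗ₖ Matrix.single j j (1 : ℂ)))) (k, a) (k', a') =
      if a = j ∧ a' = j then ψ (k, j) (k', j) else 0 := by
    intro j
    simp [Matrix.mul_apply, Fintype.sum_prod_type, Matrix.single, Matrix.one_apply,
      ite_and, ite_mul, mul_ite, Finset.sum_ite_eq, Finset.sum_ite_eq', eq_comm]
    by_cases h1 : a = j <;> by_cases h2 : a' = j <;> simp [h1, h2]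
  rw [Matrix.sum_apply]
  simp only [hR]
  simp only [ptraceFF, Matrix.of_apply, conj_apply, psiTensorMaxEnt, ite_and, mul_ite, mul_zero,
    Finset.sum_ite_eq, Finset.mem_univ, if_true, sub_right_inj]
  rcases eq_or_ne a' a with rfl | h
  · simp [Finset.sum_const, Finset.card_univ]
    field_simp
  · simp [h, Ne.symm h]
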